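/- Let a = σ_cov² − σ_A²·P_S/(ζhP), b = σ_A²(1 − Q/(ζhP)) > 0, c = −P_S/ζ < 0, d = hP(1 − Q/(ζhP)) > 0 with 0 ≤ Q < ζhP and P_S > 0. Then the function R(s) = s·log₂(1 + (cs+d)/(as+b)) is concave on the interval [d/(hP−c), min{−d/c, 1}]. -/

import Mathlib

private lemma ops_aux (a b A B x : ℝ) (hX : A * x + B ≠ 0) (hY : a * x + b ≠ 0) :
    2 * (A / (A * x + B) - a / (a * x + b))
      + x * (a * a / (a * x + b) ^ 2 - A * A / (A * x + B) ^ 2)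
    = (A * b - a * B) * (b * (A * x + B) + B * (a * x + b))
        / ((A * x + B) ^ 2 * (a * x + b) ^ 2) := by
  rw [div_sub_div _ _ hX hY, div_sub_div _ _ (pow_ne_zero 2 hY) (pow_ne_zero 2 hX), eq_div_iff (by positivity)]
  field_simp
  ring

set_option maxHeartbeats 1000000

/-- Lemma 5.1: with `a = σ_cov² − σ_A²P_S/(ζhP)`, `b = σ_A²(1 − Q/(ζhP))`,
`c = −P_S/ζ`, `d = hP(1 − Q/(ζhP))` and `0 ≤ Q < ζhP`, the OPS rate
`R(s) = s log₂(1 + (cs+d)/(as+b))` is concave on `[d/(hP−c), min{−d/c, 1}]`. -/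
theorem ops_rate_concave (h P sA scov PS ζ Q : ℝ) (hh : 0 < h) (hP : 0 < P)
    (hsA : 0 < sA) (hscov : 0 < scov) (hPS : 0 < PS)
    (hζ0 : 0 < ζ) (hζ1 : ζ ≤ 1) (hQ0 : 0 ≤ Q) (hQ : Q < ζ * h * P)
    (a b c d : ℝ)
    (ha : a = scov - sA * PS / (ζ * h * P))
    (hb : b = sA * (1 - Q / (ζ * h * P)))
    (hc : c = -(PS / ζ))
    (hd : d = h * P * (1 - Q / (ζ * h * P))) :
    ConcaveOn ℝ (Set.Icc (d / (h * P - c)) (min (-(d / c)) 1))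
      (fun s : ℝ => s * Real.logb 2 (1 + (c * s + d) / (a * s + b))) := by
  have hζhP : (0:ℝ) < ζ * h * P := by positivity
  have hfrac : 0 < 1 - Q / (ζ * h * P) := by
    rw [sub_pos, div_lt_one hζhP]; exact hQ
  have hb0 : 0 < b := by rw [hb]; exact mul_pos hsA hfrac
  have hd0 : 0 < d := by rw [hd]; exact mul_pos (mul_pos hh hP) hfrac
  have hPSζ : 0 < PS / ζ := div_pos hPS hζ0
  have hc0 : c < 0 := by rw [hc]; linarith
  have hcne : c ≠ 0 := hc0.ne
  have hΔ : 0 < a * d - b * c := by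
    have : a * d - b * c = scov * (h * P * (1 - Q / (ζ * h * P))) := by
      rw [ha, hb, hc, hd]; field_simp; ring
    rw [this]; positivity
  set lo := d / (h * P - c) with hlodef
  set hi := min (-(d / c)) 1 with hhidef
  clear_value lo hi
  have hlo0 : 0 < lo := by
    rw [hlodef]; exact div_pos hd0 (by nlinarith)
  set A := a + c with hA
  set B := b + d with hB
  clear_value A B
  have hB0 : 0 < B := by rw [hB]; linarith
  -- positivity of denominators on the interval
  have hpos : ∀ s ∈ Set.Icc lo hi, 0 < a * s + b ∧ 0 ≤ c * s + d := by
    intro s hs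
    have hs0 : 0 < s := lt_of_lt_of_le hlo0 hs.1
    have h1 : s ≤ -(d / c) := le_trans hs.2 (by rw [hhidef]; exact min_le_left _ _)
    have h2 : c * (-(d / c)) ≤ c * s := mul_le_mul_of_nonpos_left h1 hc0.le
    have h3 : c * (-(d / c)) = -d := by field_simp [mul_comm]
    have hcd : 0 ≤ c * s + d := by rw [h3] at h2; linarith
    refine ⟨?_, hcd⟩
    have hPSs : PS * s ≤ ζ * d := by
      have hcs : c * s = -(PS * s / ζ) := by rw [hc]; ring
      rw [hcs] at hcd
      have := (div_le_iff₀ hζ0).mp (by linarith : PS * s / ζ ≤ d)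
      linarith
    have hζd : ζ * d = ζ * h * P - Q := by rw [hd]; field_simp
    have key : (a * s + b) * (ζ * h * P)
        = scov * s * (ζ * h * P) + sA * (ζ * h * P - Q - PS * s) := by
      rw [ha, hb]; field_simp; ring
    have hposmul : 0 < (a * s + b) * (ζ * h * P) := by
      rw [key]
      nlinarith [mul_pos (mul_pos hscov hs0) hζhP,
        mul_nonneg hsA.le (by linarith : (0:ℝ) ≤ ζ * h * P - Q - PS * s)]
    rcases mul_pos_iff.mp hposmul with ⟨h1', _⟩ | ⟨_, h2'⟩
    · exact h1'
    · linarith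
  have hXpos : ∀ s ∈ Set.Icc lo hi, 0 < A * s + B := by
    intro s hs
    obtain ⟨hY, hcd⟩ := hpos s hs
    rw [hA, hB]; nlinarith
  -- derivatives of the model function
  have hder : ∀ x : ℝ, 0 < a * x + b → 0 < A * x + B →
      HasDerivAt (fun s : ℝ => s * (Real.log (A * s + B) - Real.log (a * s + b)))
        ((Real.log (A * x + B) - Real.log (a * x + b))
          + x * (A / (A * x + B) - a / (a * x + b))) x := by
    intro x hY hX
    have hlin1 : HasDerivAt (fun s : ℝ => A * s + B) A x := by
      simpa using ((hasDerivAt_id x).const_mul A).add_const B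
    have hlin2 : HasDerivAt (fun s : ℝ => a * s + b) a x := by
      simpa using ((hasDerivAt_id x).const_mul a).add_const b
    have hlogX := hlin1.log hX.ne'
    have hlogY := hlin2.log hY.ne'
    have H := (hasDerivAt_id x).mul (hlogX.sub hlogY)
    refine H.congr_deriv ?_
    simp only [id_eq, Pi.sub_apply]
    ring
  have hder2 : ∀ x : ℝ, 0 < a * x + b → 0 < A * x + B →
      HasDerivAt (fun s : ℝ => (Real.log (A * s + B) - Real.log (a * s + b))
          + s * (A / (A * s + B) - a / (a * s + b)))
        (2 * (A / (A * x + B) - a / (a * x + b))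
          + x * (a * a / (a * x + b) ^ 2 - A * A / (A * x + B) ^ 2)) x := by
    intro x hY hX
    have hlin1 : HasDerivAt (fun s : ℝ => A * s + B) A x := by
      simpa using ((hasDerivAt_id x).const_mul A).add_const B
    have hlin2 : HasDerivAt (fun s : ℝ => a * s + b) a x := by
      simpa using ((hasDerivAt_id x).const_mul a).add_const b
    have hlogX := hlin1.log hX.ne'
    have hlogY := hlin2.log hY.ne'
    have hfX : HasDerivAt (fun s : ℝ => A / (A * s + B))
        ((0 * (A * x + B) - A * A) / (A * x + B) ^ 2) x :=
      (hasDerivAt_const x A).div hlin1 hX.ne'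
    have hfY : HasDerivAt (fun s : ℝ => a / (a * s + b))
        ((0 * (a * x + b) - a * a) / (a * x + b) ^ 2) x :=
      (hasDerivAt_const x a).div hlin2 hY.ne'
    have H := (hlogX.sub hlogY).add ((hasDerivAt_id x).mul (hfX.sub hfY))
    refine H.congr_deriv ?_
    simp only [id_eq, Pi.sub_apply]
    field_simp
    ring
  -- concavity of the model function
  have hcg : ConcaveOn ℝ (Set.Icc lo hi)
      (fun s : ℝ => s * (Real.log (A * s + B) - Real.log (a * s + b))) := by
    apply concaveOn_of_hasDerivWithinAt2_nonpos (convex_Icc _ _)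
      (f' := fun x => (Real.log (A * x + B) - Real.log (a * x + b))
          + x * (A / (A * x + B) - a / (a * x + b)))
      (f'' := fun x => 2 * (A / (A * x + B) - a / (a * x + b))
          + x * (a * a / (a * x + b) ^ 2 - A * A / (A * x + B) ^ 2))
    · intro s hs
      exact (hder s (hpos s hs).1 (hXpos s hs)).continuousAt.continuousWithinAt
    · intro s hs
      have hs' := interior_subset hs
      exact (hder s (hpos s hs').1 (hXpos s hs')).hasDerivWithinAt
    · intro s hs
      have hs' := interior_subset hs
      exact (hder2 s (hpos s hs').1 (hXpos s hs')).hasDerivWithinAt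
    · intro s hs
      have hs' := interior_subset hs
      have hY := (hpos s hs').1
      have hX := hXpos s hs'
      have hkey := ops_aux a b A B s hX.ne' hY.ne'
      have hAb : A * b - a * B = -(a * d - b * c) := by rw [hA, hB]; ring
      rw [hkey, hAb]
      apply div_nonpos_of_nonpos_of_nonneg
      · have hpos2 : 0 < b * (A * s + B) + B * (a * s + b) := by positivity
        nlinarith
      · positivity
  -- scale and transfer to the original function
  have hcg2 := hcg.smul (c := (Real.log 2)⁻¹) (by positivity)
  apply hcg2.congr
  intro s hs
  have hY := (hpos s hs).1
  have hX := hXpos s hs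
  have h1 : 1 + (c * s + d) / (a * s + b) = (A * s + B) / (a * s + b) := by
    rw [hA, hB, eq_div_iff hY.ne', add_mul, div_mul_cancel₀ _ hY.ne']; ring
  simp only [Pi.smul_apply, smul_eq_mul]
  rw [h1, Real.logb, Real.log_div hX.ne' hY.ne']
  ring
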